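/- Let S be a monoid. Let U_Pr be the class of unitary S-monomorphisms f : X → Y such that Y∖im(f) is a projective S-act, and let E be the class of all S-epimorphisms. Then (U_Pr, E) is a weak factorization system. -/

import Mathlib

universe u

/-- A right `S`-act: a set with a right action of the monoid `S`. -/
structure SAct (S : Type u) [Monoid S] : Type (u + 1) where
  carrier : Type u
  act : carrier → S → carrier
  act_one : ∀ a, act a 1 = a
  act_mul : ∀ a s t, act (act a s) t = act a (s * t)

/-- A map of right `S`-acts. -/
structure SMap {S : Type u} [Monoid S] (A B : SAct S) : Type u where
  toFun : A.carrier → B.carrier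
  map_act : ∀ a s, toFun (A.act a s) = B.act (toFun a) s

namespace SMap

variable {S : Type u} [Monoid S]

/-- Composition of `S`-maps. -/
def comp {A B C : SAct S} (g : SMap B C) (f : SMap A B) : SMap A C :=
  ⟨fun a => g.toFun (f.toFun a), fun a s => by
    show g.toFun (f.toFun (A.act a s)) = C.act (g.toFun (f.toFun a)) s
    rw [f.map_act, g.map_act]⟩

/-- The identity `S`-map. -/
def id (A : SAct S) : SMap A A := ⟨fun a => a, fun _ _ => rfl⟩

end SMap

variable {S : Type u} [Monoid S]

/-- `f` has the left lifting property with respect to `g` (equivalently, `g` has the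
right lifting property with respect to `f`). -/
def Lifts {A B C D : SAct S} (f : SMap A B) (g : SMap C D) : Prop :=
  ∀ (u : SMap A C) (v : SMap B D), g.comp u = v.comp f →
    ∃ h : SMap B C, h.comp f = u ∧ g.comp h = v

/-- A class of `S`-maps. -/
def MapClass (S : Type u) [Monoid S] : Type (u + 1) :=
  ∀ {A B : SAct S}, SMap A B → Prop

/-- `C^□`: the class of maps with the right lifting property with respect to every map of `C`. -/
def rlpC (C : MapClass S) : MapClass S :=
  fun {_ _} g => ∀ {A B : SAct S} (f : SMap A B), C f → Lifts f g

/-- `□C`: the class of maps with the left lifting property with respect to every map of `C`. -/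
def llpC (C : MapClass S) : MapClass S :=
  fun {_ _} f => ∀ {C' D : SAct S} (g : SMap C' D), C g → Lifts f g

/-- `cof(C) = □(C^□)`. -/
def cofC (C : MapClass S) : MapClass S := llpC (rlpC C)

/-- `fib(C) = (□C)^□`. -/
def fibC (C : MapClass S) : MapClass S := rlpC (llpC C)

/-- `(L, R)` is a weak factorization system. -/
structure IsWFS (L R : MapClass S) : Prop where
  rlp_eq : ∀ {A B : SAct S} (g : SMap A B), R g ↔ rlpC L g
  llp_eq : ∀ {A B : SAct S} (f : SMap A B), L f ↔ llpC R f
  factor : ∀ {A B : SAct S} (h : SMap A B),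
    ∃ (C : SAct S) (f : SMap A C) (g : SMap C B), L f ∧ R g ∧ g.comp f = h

/-- `g : A → C` is a retract of `f : A → B`:  there are `α : C → B`, `β : B → C` with
`β ∘ α = 1`, `α ∘ g = f` and `β ∘ f = g`. -/
def RetractOfMap {A B C : SAct S} (g : SMap A C) (f : SMap A B) : Prop :=
  ∃ (α : SMap C B) (β : SMap B C),
    β.comp α = SMap.id C ∧ α.comp g = f ∧ β.comp f = g

/-- The square with sides `f : A → B`, `u : A → X`, `fbar : X → P`, `v : B → P` is a pushout
square (i.e. `fbar` is the pushout of `f` along `u`). -/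
structure IsPushoutSq {A B X P : SAct S}
    (f : SMap A B) (u : SMap A X) (fbar : SMap X P) (v : SMap B P) : Prop where
  comm : fbar.comp u = v.comp f
  ue : ∀ ⦃Q : SAct S⦄ (g' : SMap X Q) (v' : SMap B Q), g'.comp u = v'.comp f →
    ∃! k : SMap P Q, k.comp fbar = g' ∧ k.comp v = v'

/-- The square with sides `pr1 : P → D`, `pr2 : P → A`, `g : A → B`, `v : D → B` is a
pullback square (i.e. `pr1` is the pullback of `g` along `v`). -/
structure IsPullbackSq {P A D B : SAct S}
    (pr1 : SMap P D) (pr2 : SMap P A) (g : SMap A B) (v : SMap D B) : Prop where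
  comm : g.comp pr2 = v.comp pr1
  ue : ∀ ⦃Q : SAct S⦄ (q1 : SMap Q D) (q2 : SMap Q A), g.comp q2 = v.comp q1 →
    ∃! k : SMap Q P, pr1.comp k = q1 ∧ pr2.comp k = q2

/-- `f` is an isomorphism of `S`-acts. -/
def IsIsoMap {A B : SAct S} (f : SMap A B) : Prop :=
  ∃ g : SMap B A, g.comp f = SMap.id A ∧ f.comp g = SMap.id B

/-- A directed system of `S`-acts indexed by the ordinals `< lam`. -/
structure OSeq (S : Type u) [Monoid S] (lam : Ordinal.{u}) where
  obj : ∀ a : Ordinal.{u}, a < lam → SAct S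
  map : ∀ (a b : Ordinal.{u}) (hab : a ≤ b) (hb : b < lam),
    SMap (obj a (lt_of_le_of_lt hab hb)) (obj b hb)
  map_id : ∀ (a : Ordinal.{u}) (ha : a < lam), map a a le_rfl ha = SMap.id (obj a ha)
  map_comp : ∀ (a b c : Ordinal.{u}) (hab : a ≤ b) (hbc : b ≤ c) (hc : c < lam),
    (map b c hbc hc).comp (map a b hab (lt_of_le_of_lt hbc hc)) = map a c (le_trans hab hbc) hc

/-- A cocone over a directed system of `S`-acts indexed by ordinals `< lam`. -/
structure OCocone {lam : Ordinal.{u}} (F : OSeq S lam) where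
  pt : SAct S
  ι : ∀ (a : Ordinal.{u}) (ha : a < lam), SMap (F.obj a ha) pt
  fac : ∀ (a b : Ordinal.{u}) (hab : a ≤ b) (hb : b < lam),
    (ι b hb).comp (F.map a b hab hb) = ι a (lt_of_le_of_lt hab hb)

/-- A cocone is a (directed) colimit if it satisfies the universal property. -/
def IsColimitO {lam : Ordinal.{u}} {F : OSeq S lam} (c : OCocone F) : Prop :=
  ∀ d : OCocone F, ∃! k : SMap c.pt d.pt, ∀ (a : Ordinal.{u}) (ha : a < lam),
    k.comp (c.ι a ha) = d.ι a ha

/-- Restriction of a directed system to the ordinals `< γ`. -/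
def OSeq.restrict {lam : Ordinal.{u}} (F : OSeq S lam) (γ : Ordinal.{u}) (hγ : γ ≤ lam) :
    OSeq S γ where
  obj a ha := F.obj a (lt_of_lt_of_le ha hγ)
  map a b hab hb := F.map a b hab (lt_of_lt_of_le hb hγ)
  map_id a ha := F.map_id a _
  map_comp a b c hab hbc hc := F.map_comp a b c hab hbc _

/-- The cocone over the restriction to `γ` with vertex `F.obj γ`. -/
def OSeq.coconeAt {lam : Ordinal.{u}} (F : OSeq S lam) (γ : Ordinal.{u}) (hγ : γ < lam) :
    OCocone (F.restrict γ hγ.le) where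
  pt := F.obj γ hγ
  ι a ha := F.map a γ ha.le hγ
  fac a b hab hb := F.map_comp a b γ hab hb.le hγ

/-- A `λ`-sequence: a directed system of `S`-acts indexed by the ordinals `< λ`, together
with a directed colimit, which is continuous at every limit ordinal `γ ≤ λ`. -/
structure LambdaSequence (S : Type u) [Monoid S] (lam : Ordinal.{u}) where
  seq : OSeq S lam
  cocone : OCocone seq
  isColimit : IsColimitO cocone
  continuity : ∀ (γ : Ordinal.{u}) (hγ : γ < lam), Order.IsSuccLimit γ →
    IsColimitO (seq.coconeAt γ hγ)

/-- An ordinal `lam` is `γ`-filtered: it is a limit ordinal and every subset of `lam` of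
cardinality at most `γ` has supremum `< lam`. -/
def IsGammaFiltered (γ : Cardinal.{u}) (lam : Ordinal.{u}) : Prop :=
  Order.IsSuccLimit lam ∧ ∀ A : Set Ordinal.{u}, A ⊆ Set.Iio lam →
    Cardinal.mk A ≤ Cardinal.lift.{u + 1} γ → sSup A < lam

/-- A split monomorphism. -/
def SplitMonoM {A B : SAct S} (f : SMap A B) : Prop :=
  ∃ γ : SMap B A, γ.comp f = SMap.id A

/-- A split epimorphism. -/
def SplitEpiM {A B : SAct S} (f : SMap A B) : Prop :=
  ∃ γ : SMap B A, f.comp γ = SMap.id B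

/-- A unitary monomorphism of `S`-acts. -/
def IsUnitaryMono {X Y : SAct S} (f : SMap X Y) : Prop :=
  Function.Injective f.toFun ∧
    ∀ (y : Y.carrier) (s : S), Y.act y s ∈ Set.range f.toFun → y ∈ Set.range f.toFun

/-- The class of unitary monomorphisms. -/
def UnitaryClass (S : Type u) [Monoid S] : MapClass S := fun {_ _} f => IsUnitaryMono f

/-- The class of split epimorphisms. -/
def SplitEpiClass (S : Type u) [Monoid S] : MapClass S := fun {_ _} f => SplitEpiM f

/-- `P` is projective with respect to the map `f : A → B`. -/
def ProjWrt (P : SAct S) {A B : SAct S} (f : SMap A B) : Prop :=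
  ∀ g : SMap P B, ∃ h : SMap P A, f.comp h = g

/-- `Q` is a retract of the act `P`. -/
def ActRetract (Q P : SAct S) : Prop :=
  ∃ (α : SMap Q P) (β : SMap P Q), β.comp α = SMap.id Q

/-- The coproduct (disjoint union) of two `S`-acts. -/
def SAct.coprod (A B : SAct S) : SAct S where
  carrier := A.carrier ⊕ B.carrier
  act x s := Sum.elim (fun a => Sum.inl (A.act a s)) (fun b => Sum.inr (B.act b s)) x
  act_one x := by cases x <;> simp [SAct.act_one]
  act_mul x s t := by cases x <;> simp [SAct.act_mul]

/-- The coproduct (disjoint union) of a family of `S`-acts. -/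
def SAct.sigmaCoprod {ι : Type u} (F : ι → SAct S) : SAct S where
  carrier := Σ i, (F i).carrier
  act x s := ⟨x.1, (F x.1).act x.2 s⟩
  act_one x := by cases x with | mk i a => exact congrArg (Sigma.mk i) ((F i).act_one a)
  act_mul x s t := by cases x with | mk i a => exact congrArg (Sigma.mk i) ((F i).act_mul a s t)

/-- The coproduct of a family of `S`-maps. -/
def coprodMap {ι : Type u} {A B : ι → SAct S} (f : ∀ i, SMap (A i) (B i)) :
    SMap (SAct.sigmaCoprod A) (SAct.sigmaCoprod B) where
  toFun x := ⟨x.1, (f x.1).toFun x.2⟩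
  map_act x s := congrArg (Sigma.mk x.1) ((f x.1).map_act x.2 s)

/-- An isomorphism class predicate: `A` and `B` are isomorphic `S`-acts. -/
def ActIso (A B : SAct S) : Prop := ∃ f : SMap A B, Function.Bijective f.toFun

/-- `B` is a direct summand of `A`. -/
def IsDirectSummand (B A : SAct S) : Prop := ∃ C : SAct S, ActIso (SAct.coprod B C) A

/-- The subact of `Y` on a subset `T` closed under the action. -/
def SAct.sub (Y : SAct S) (T : Set Y.carrier) (hT : ∀ t ∈ T, ∀ s : S, Y.act t s ∈ T) :
    SAct S where
  carrier := {y // y ∈ T}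
  act t s := ⟨Y.act t.1 s, hT t.1 t.2 s⟩
  act_one t := Subtype.ext (Y.act_one t.1)
  act_mul t s r := Subtype.ext (Y.act_mul t.1 s r)

/-- A class of `S`-acts. -/
def ActClass (S : Type u) [Monoid S] : Type (u + 1) := SAct S → Prop

/-- The class `R_X` of maps with respect to which every act of `X` is projective. -/
def RXClass (𝒳 : ActClass S) : MapClass S :=
  fun {_ _} f => ∀ P : SAct S, 𝒳 P → ProjWrt P f

/-- The class `U_X` of unitary monomorphisms `f : X → Y` with `Y ∖ im f ∈ X`. -/
def UXClass (𝒳 : ActClass S) : MapClass S :=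
  fun {_ Y} f =>
    ∃ (_ : Function.Injective f.toFun)
      (hu : ∀ (y : Y.carrier) (s : S),
        Y.act y s ∈ Set.range f.toFun → y ∈ Set.range f.toFun),
      𝒳 (Y.sub (Set.range f.toFun)ᶜ (fun t ht s hmem => ht (hu t s hmem)))

/-- Every `S`-act has an `𝒳`-precover. -/
def HasPrecover (𝒳 : ActClass S) (A : SAct S) : Prop :=
  ∃ (P : SAct S) (g : SMap P A), 𝒳 P ∧
    ∀ ⦃P' : SAct S⦄ (g' : SMap P' A), 𝒳 P' → ∃ f : SMap P' P, g.comp f = g'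

/-- A projective `S`-act. -/
def ProjectiveAct (P : SAct S) : Prop :=
  ∀ ⦃A B : SAct S⦄ (f : SMap A B), Function.Surjective f.toFun → ProjWrt P f

/-- The class of all surjective `S`-maps (epimorphisms). -/
def EpiClass (S : Type u) [Monoid S] : MapClass S :=
  fun {_ _} f => Function.Surjective f.toFun

/-- The free `S`-act on `n` generators. -/
def freeAct (S : Type u) [Monoid S] (n : ℕ) : SAct S where
  carrier := Fin n × S
  act p s := (p.1, p.2 * s)
  act_one p := by simp
  act_mul p s t := by simp [mul_assoc]

/-- `r` is a congruence on the `S`-act `A`. -/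
def IsCong (A : SAct S) (r : A.carrier → A.carrier → Prop) : Prop :=
  Equivalence r ∧ ∀ (a b : A.carrier) (s : S), r a b → r (A.act a s) (A.act b s)

/-- A finitely presented `S`-act: a quotient of a finitely generated free act by a
finitely generated congruence. -/
def FinPresented (M : SAct S) : Prop :=
  ∃ (n : ℕ) (q : SMap (freeAct S n) M), Function.Surjective q.toFun ∧
    ∃ (m : ℕ) (p : Fin m → (freeAct S n).carrier × (freeAct S n).carrier),
      (∀ i, q.toFun (p i).1 = q.toFun (p i).2) ∧
      ∀ r : (freeAct S n).carrier → (freeAct S n).carrier → Prop, IsCong (freeAct S n) r →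
        (∀ i, r (p i).1 (p i).2) →
        ∀ x y, q.toFun x = q.toFun y → r x y

/-- A pure epimorphism of `S`-acts. -/
def IsPureEpi {X Y : SAct S} (ψ : SMap X Y) : Prop :=
  Function.Surjective ψ.toFun ∧
    ∀ (M : SAct S), FinPresented M → ∀ f : SMap M Y, ∃ g : SMap M X, ψ.comp g = f

/-- The class of retracts of coproducts of finitely presented acts. -/
def RIFPClass (S : Type u) [Monoid S] : ActClass S :=
  fun A => ∃ (ι : Type u) (F : ι → SAct S),
    (∀ i, FinPresented (F i)) ∧ ActRetract A (SAct.sigmaCoprod F)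

/-- The one-element `S`-act. -/
def oneAct (S : Type u) [Monoid S] : SAct S :=
  ⟨PUnit, fun _ _ => PUnit.unit, fun _ => rfl, fun _ _ _ => rfl⟩

/-- The unique map to the one-element act. -/
def bangMap (A : SAct S) : SMap A (oneAct S) := ⟨fun _ => PUnit.unit, fun _ _ => rfl⟩

/-- The monoid `S` as a right `S`-act. -/
def regAct (S : Type u) [Monoid S] : SAct S := ⟨S, fun a s => a * s, mul_one, mul_assoc⟩

/-- The set of fixed points of an `S`-act. -/
def FixSet (A : SAct S) : Set A.carrier := {a | ∀ s : S, A.act a s = a}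

/-- The Rees quotient of `Y` collapsing the subset `T` (closed under the action) to a point. -/
def reesQuot (Y : SAct S) (T : Set Y.carrier) (hT : ∀ t ∈ T, ∀ s : S, Y.act t s ∈ T) :
    SAct S where
  carrier := Quot (fun a b => a = b ∨ (a ∈ T ∧ b ∈ T))
  act q s := Quot.lift (fun y => Quot.mk _ (Y.act y s))
    (fun a b hab => by
      rcases hab with h | ⟨ha, hb⟩
      · rw [h]
      · exact Quot.sound (Or.inr ⟨hT a ha s, hT b hb s⟩)) q
  act_one q := by
    induction q using Quot.ind with
    | _ y => exact congrArg (Quot.mk _) (Y.act_one y)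
  act_mul q s t := by
    induction q using Quot.ind with
    | _ y => exact congrArg (Quot.mk _) (Y.act_mul y s t)

/-- The class of monomorphisms whose Rees quotient lies in `𝒳`. -/
def XMonoClass (𝒳 : ActClass S) : MapClass S :=
  fun {X Y} f =>
    Function.Injective f.toFun ∧
      𝒳 (reesQuot Y (Set.range f.toFun)
        (fun t ht s => by
          obtain ⟨x, rfl⟩ := ht
          exact ⟨X.act x s, f.map_act x s⟩))

/-- The type of all `S`-maps (arrows). -/
def ArrowCls (S : Type u) [Monoid S] : Type (u + 1) := Σ (A B : SAct S), SMap A B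

/-- The class of pushouts of maps in `𝒞`. -/
def pushoutsOf (𝒞 : MapClass S) : MapClass S :=
  fun {X P} fbar => ∃ (A B : SAct S) (f : SMap A B) (u : SMap A X) (v : SMap B P),
    𝒞 f ∧ IsPushoutSq f u fbar v

/-- `h` is a transfinite composition of maps in `𝒟`. -/
def IsTransfiniteCompOf (𝒟 : MapClass S) {A L : SAct S} (h : SMap A L) : Prop :=
  ∃ (lam : Ordinal.{u}), Ordinal.omega0 ≤ lam ∧
    ∃ (Φ : LambdaSequence S lam) (h0 : (0 : Ordinal.{u}) < lam),
      (∀ (b : Ordinal.{u}) (hb : b + 1 < lam),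
        𝒟 (Φ.seq.map b (b + 1) (le_self_add (a := b) (b := 1)) hb)) ∧
      Φ.seq.obj 0 h0 = A ∧ Φ.cocone.pt = L ∧ HEq (Φ.cocone.ι 0 h0) h

/-- `ret(𝒞)`: retracts of transfinite compositions of pushouts of maps in `𝒞`. -/
def retClass (𝒞 : MapClass S) : MapClass S :=
  fun {A _} g => ∃ (B : SAct S) (f : SMap A B),
    IsTransfiniteCompOf (pushoutsOf 𝒞) f ∧ RetractOfMap g f

/-- The class of pure epimorphisms. -/
def PureEpiClass (S : Type u) [Monoid S] : MapClass S := fun {_ _} f => IsPureEpi f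

/-- The subact `{z}` of `S`, for a left zero `z`. -/
def zSub (z : S) (hz : ∀ s : S, z * s = z) : SAct S :=
  (regAct S).sub {z} (fun t ht s => by
    have ht' : t = z := ht
    rw [ht']; exact hz s)

/-- The inclusion `{z} → S`, for a left zero `z`. -/
def zIncl (z : S) (hz : ∀ s : S, z * s = z) : SMap (zSub z hz) (regAct S) :=
  ⟨fun t => t.1, fun _ _ => rfl⟩

/-- The subact `K_d = g⁻¹(d)` of `C`, for a fixed point `d` of `D`. -/
def kerAct {C D : SAct S} (g : SMap C D) (d : D.carrier) (hd : d ∈ FixSet D) : SAct S :=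
  C.sub {c | g.toFun c = d} (fun c hc s => by
    simp only [Set.mem_setOf_eq] at hc ⊢
    rw [g.map_act, hc]
    exact hd s)

/-- A centred `S`-act: an act with exactly one fixed point. -/
def CAct (S : Type u) [Monoid S] : Type (u + 1) :=
  {A : SAct S // ∃! a : A.carrier, ∀ s : S, A.act a s = a}

/-- A class of maps of centred `S`-acts. -/
abbrev MapClassC (S : Type u) [Monoid S] : Type (u + 1) :=
  ∀ (A B : CAct S), SMap A.1 B.1 → Prop

/-- `C^□` in the category of centred `S`-acts. -/
def rlpCC (𝒞 : MapClassC S) : MapClassC S :=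
  fun _ _ g => ∀ (X Y : CAct S) (f : SMap X.1 Y.1), 𝒞 X Y f → Lifts f g

/-- `□C` in the category of centred `S`-acts. -/
def llpCC (𝒞 : MapClassC S) : MapClassC S :=
  fun _ _ f => ∀ (X Y : CAct S) (g : SMap X.1 Y.1), 𝒞 X Y g → Lifts f g

/-- A weak factorization system in the category of centred `S`-acts. -/
structure IsWFSC (L R : MapClassC S) : Prop where
  rlp_eq : ∀ (A B : CAct S) (g : SMap A.1 B.1), R A B g ↔ rlpCC L A B g
  llp_eq : ∀ (A B : CAct S) (f : SMap A.1 B.1), L A B f ↔ llpCC R A B f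
  factor : ∀ (A B : CAct S) (h : SMap A.1 B.1),
    ∃ (C : CAct S) (f : SMap A.1 C.1) (g : SMap C.1 B.1), L A C f ∧ R C B g ∧ g.comp f = h

/-- The one-element centred `S`-act `0`. -/
def oneCAct (S : Type u) [Monoid S] : CAct S :=
  ⟨oneAct S, PUnit.unit, fun _ => rfl, fun _ _ => rfl⟩

/-- The unique map `0 → X` of centred `S`-acts. -/
noncomputable def zeroTo (X : CAct S) : SMap (oneCAct S).1 X.1 :=
  ⟨fun _ => X.2.choose, fun _ s => (X.2.choose_spec.1 s).symm⟩

/-! ### Auxiliary machinery for the proof of statement12 -/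

theorem smap_ext {A B : SAct S} {f g : SMap A B} (h : ∀ a, f.toFun a = g.toFun a) : f = g := by
  cases f with
  | mk tf mf =>
    cases g with
    | mk tg mg =>
      have : tf = tg := funext h
      subst this
      rfl

/-- Generic projectivity criterion: if every element of `T` can be written functorially as
`β t · σ t`, then `T` is projective. -/
theorem genProj {T : SAct S} (β : T.carrier → T.carrier) (σ : T.carrier → S)
    (h1 : ∀ t, T.act (β t) (σ t) = t)
    (h2 : ∀ t s, β (T.act t s) = β t)
    (h3 : ∀ t s, σ (T.act t s) = σ t * s) : ProjectiveAct T := by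
  intro A B q hq u
  classical
  let c : B.carrier → A.carrier := fun b => (hq b).choose
  have hc : ∀ b, q.toFun (c b) = b := fun b => (hq b).choose_spec
  refine ⟨⟨fun t => A.act (c (u.toFun (β t))) (σ t), ?_⟩, ?_⟩
  · intro t s
    show A.act (c (u.toFun (β (T.act t s)))) (σ (T.act t s)) =
      A.act (A.act (c (u.toFun (β t))) (σ t)) s
    rw [h2, h3, A.act_mul]
  · apply smap_ext
    intro t
    show q.toFun (A.act (c (u.toFun (β t))) (σ t)) = u.toFun t
    rw [q.map_act, hc, ← u.map_act, h1]

/-- The key lifting lemma: maps in `U_Pr` lift against all epimorphisms. -/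
theorem main_lift {X Y A B : SAct S} (f : SMap X Y) (g : SMap A B)
    (hf : UXClass (fun P : SAct S => ProjectiveAct P) f)
    (hg : Function.Surjective g.toFun) : Lifts f g := by
  classical
  obtain ⟨hinj, hu, hproj⟩ := hf
  intro u v hsq
  have hsq' : ∀ x, g.toFun (u.toFun x) = v.toFun (f.toFun x) :=
    fun x => congrArg (fun m => SMap.toFun m x) hsq
  set T := Y.sub (Set.range f.toFun)ᶜ (fun t ht s hmem => ht (hu t s hmem)) with hT
  let incl : SMap T Y := ⟨fun t => t.1, fun _ _ => rfl⟩
  obtain ⟨k, hk⟩ := hproj g hg (v.comp incl)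
  have hk' : ∀ t, g.toFun (k.toFun t) = v.toFun t.1 :=
    fun t => congrArg (fun m => SMap.toFun m t) hk
  refine ⟨⟨fun y => if hy : y ∈ Set.range f.toFun then u.toFun hy.choose
      else k.toFun ⟨y, hy⟩, ?_⟩, ?_, ?_⟩
  · intro y s
    by_cases hy : y ∈ Set.range f.toFun
    · have hx := hy.choose_spec
      have hys : Y.act y s ∈ Set.range f.toFun :=
        ⟨X.act hy.choose s, by rw [f.map_act, hx]⟩
      simp only [dif_pos hy, dif_pos hys]
      have he : hys.choose = X.act hy.choose s := hinj (by rw [hys.choose_spec, f.map_act, hx])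
      rw [he, u.map_act]
    · have hys : Y.act y s ∉ Set.range f.toFun := fun hmem => hy (hu y s hmem)
      simp only [dif_neg hy, dif_neg hys]
      have he : (⟨Y.act y s, hys⟩ : T.carrier) = T.act ⟨y, hy⟩ s := rfl
      rw [he]; exact k.map_act _ s
  · apply smap_ext
    intro a
    have hy : f.toFun a ∈ Set.range f.toFun := ⟨a, rfl⟩
    show (if hy' : f.toFun a ∈ Set.range f.toFun then u.toFun hy'.choose
      else k.toFun ⟨f.toFun a, hy'⟩) = u.toFun a
    rw [dif_pos hy]
    exact congrArg u.toFun (hinj hy.choose_spec)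
  · apply smap_ext
    intro y
    show g.toFun (if hy : y ∈ Set.range f.toFun then u.toFun hy.choose
      else k.toFun ⟨y, hy⟩) = v.toFun y
    by_cases hy : y ∈ Set.range f.toFun
    · rw [dif_pos hy, hsq', hy.choose_spec]
    · rw [dif_neg hy]; exact hk' _

/-- The free `S`-act on a type. -/
def freeOn (T : Type u) : SAct S where
  carrier := T × S
  act p s := (p.1, p.2 * s)
  act_one p := by simp
  act_mul p s t := by simp [mul_assoc]

/-- The middle object of the factorization of a map `X → Y`. -/
def factObj (X Y : SAct S) : SAct S := SAct.coprod X (freeOn Y.carrier)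

/-- The left part of the factorization. -/
def factJ (X Y : SAct S) : SMap X (factObj X Y) := ⟨Sum.inl, fun _ _ => rfl⟩

/-- The right part of the factorization. -/
def factG {X Y : SAct S} (h : SMap X Y) : SMap (factObj X Y) Y where
  toFun := Sum.elim h.toFun (fun p => Y.act p.1 p.2)
  map_act a s := by
    cases a with
    | inl x => exact h.map_act x s
    | inr p => exact (Y.act_mul p.1 p.2 s).symm

theorem factG_surj {X Y : SAct S} (h : SMap X Y) : Function.Surjective (factG h).toFun :=
  fun y => ⟨Sum.inr (y, 1), Y.act_one y⟩

theorem factJ_mem (X Y : SAct S) :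
    UXClass (fun P : SAct S => ProjectiveAct P) (factJ X Y) := by
  classical
  have hinj : Function.Injective (factJ X Y).toFun := fun a b h => Sum.inl.inj h
  have hu : ∀ (y : (factObj X Y).carrier) (s : S),
      (factObj X Y).act y s ∈ Set.range (factJ X Y).toFun →
        y ∈ Set.range (factJ X Y).toFun := by
    intro y s hmem
    cases y with
    | inl x => exact ⟨x, rfl⟩
    | inr p =>
      obtain ⟨x, hx⟩ := hmem
      exact (Sum.inl_ne_inr hx).elim
  refine ⟨hinj, hu, ?_⟩
  set T := (factObj X Y).sub (Set.range (factJ X Y).toFun)ᶜ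
    (fun t ht s hmem => ht (hu t s hmem)) with hTdef
  have ex : ∀ t : T.carrier, ∃ p : Y.carrier × S, t.1 = Sum.inr p := by
    intro t
    cases ht : t.1 with
    | inl x => exact absurd ⟨x, ht.symm⟩ t.2
    | inr p => exact ⟨p, rfl⟩
  let P : T.carrier → Y.carrier × S := fun t => (ex t).choose
  have hP : ∀ t, t.1 = Sum.inr (P t) := fun t => (ex t).choose_spec
  have hPact : ∀ (t : T.carrier) (s : S), P (T.act t s) = ((P t).1, (P t).2 * s) := by
    intro t s
    apply Sum.inr.inj (α := X.carrier)
    rw [← hP (T.act t s)]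
    show (factObj X Y).act t.1 s = _
    rw [hP t]
    rfl
  have hgen : ∀ b : Y.carrier, (Sum.inr (b, (1 : S)) : (factObj X Y).carrier) ∈
      (Set.range (factJ X Y).toFun)ᶜ := by
    rintro b ⟨x, hx⟩
    exact Sum.inl_ne_inr hx
  refine genProj (T := T) (fun t => ⟨Sum.inr ((P t).1, 1), hgen (P t).1⟩)
    (fun t => (P t).2) ?_ ?_ ?_
  · intro t
    apply Subtype.ext
    show (factObj X Y).act (Sum.inr ((P t).1, 1)) (P t).2 = t.1
    rw [hP t]
    show (Sum.inr ((P t).1, 1 * (P t).2) : (factObj X Y).carrier) = Sum.inr (P t)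
    rw [one_mul]
    rfl
  · intro t s
    apply Subtype.ext
    show (Sum.inr ((P (T.act t s)).1, (1:S)) : (factObj X Y).carrier) = Sum.inr ((P t).1, 1)
    rw [hPact]
    rfl
  · intro t s
    show (P (T.act t s)).2 = (P t).2 * s
    rw [hPact]

/-- The empty `S`-act. -/
def emptyAct (S : Type u) [Monoid S] : SAct S where
  carrier := PEmpty
  act a _ := a.elim
  act_one a := a.elim
  act_mul a _ _ := a.elim

/-- The unique map from the empty act. -/
def emptyTo (A : SAct S) : SMap (emptyAct S) A := ⟨fun a => a.elim, fun a _ => a.elim⟩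

theorem emptyTo_mem :
    UXClass (fun P : SAct S => ProjectiveAct P) (emptyTo (regAct S)) := by
  have hinj : Function.Injective (emptyTo (regAct S)).toFun := fun a => a.elim
  have hu : ∀ (y : (regAct S).carrier) (s : S),
      (regAct S).act y s ∈ Set.range (emptyTo (regAct S)).toFun →
        y ∈ Set.range (emptyTo (regAct S)).toFun := by
    rintro y s ⟨x, -⟩
    exact x.elim
  refine ⟨hinj, hu, ?_⟩
  set T := (regAct S).sub (Set.range (emptyTo (regAct S)).toFun)ᶜ
    (fun t ht s hmem => ht (hu t s hmem)) with hTdef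
  have hone : (1 : S) ∈ (Set.range (emptyTo (regAct S)).toFun)ᶜ := by
    rintro ⟨x, -⟩
    exact x.elim
  refine genProj (T := T) (fun _ => ⟨(1 : S), hone⟩) (fun t => (t.1 : S)) ?_ ?_ ?_
  · intro t
    apply Subtype.ext
    exact one_mul (show S from t.1)
  · intro t s
    rfl
  · intro t s
    rfl

theorem llp_to_mem {X Y : SAct S} (f : SMap X Y) (hf : llpC (EpiClass S) f) :
    UXClass (fun P : SAct S => ProjectiveAct P) f := by
  classical
  have hsq : (factG f).comp (factJ X Y) = (SMap.id Y).comp f := smap_ext fun x => rfl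
  obtain ⟨h, hhf, hgh⟩ := hf (factG f) (factG_surj f) (factJ X Y) (SMap.id Y) hsq
  have hhf' : ∀ x, h.toFun (f.toFun x) = Sum.inl x :=
    fun x => congrArg (fun m => SMap.toFun m x) hhf
  have hgh' : ∀ y, (factG f).toFun (h.toFun y) = y :=
    fun y => congrArg (fun m => SMap.toFun m y) hgh
  have hinj : Function.Injective f.toFun := by
    intro a b hab
    have : (Sum.inl a : (factObj X Y).carrier) = Sum.inl b := by
      rw [← hhf' a, ← hhf' b, hab]
    exact Sum.inl.inj this
  have hu : ∀ (y : Y.carrier) (s : S),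
      Y.act y s ∈ Set.range f.toFun → y ∈ Set.range f.toFun := by
    intro y s hmem
    obtain ⟨x, hx⟩ := hmem
    cases hy : h.toFun y with
    | inl x' =>
      refine ⟨x', ?_⟩
      have := hgh' y
      rw [hy] at this
      exact this
    | inr p =>
      exfalso
      have h1 : (Sum.inl x : (factObj X Y).carrier) = (factObj X Y).act (h.toFun y) s := by
        rw [← hhf' x, hx, h.map_act]
      rw [hy] at h1
      have h2 : (factObj X Y).act (Sum.inr p) s = Sum.inr (p.1, p.2 * s) := rfl
      rw [h2] at h1
      exact Sum.inl_ne_inr h1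
  refine ⟨hinj, hu, ?_⟩
  set T := Y.sub (Set.range f.toFun)ᶜ (fun t ht s hmem => ht (hu t s hmem)) with hTdef
  have ex : ∀ t : T.carrier, ∃ p : Y.carrier × S,
      h.toFun t.1 = Sum.inr p ∧ Y.act p.1 p.2 = t.1 ∧ p.1 ∉ Set.range f.toFun := by
    intro t
    cases hy : h.toFun t.1 with
    | inl x =>
      exfalso
      apply t.2
      refine ⟨x, ?_⟩
      have := hgh' t.1
      rw [hy] at this
      exact this
    | inr p =>
      refine ⟨p, rfl, ?_, ?_⟩
      · have := hgh' t.1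
        rw [hy] at this
        exact this
      · rintro ⟨x, hxp⟩
        apply t.2
        refine ⟨X.act x p.2, ?_⟩
        have := hgh' t.1
        rw [hy] at this
        rw [f.map_act, hxp]
        exact this
  let P : T.carrier → Y.carrier × S := fun t => (ex t).choose
  have hP1 : ∀ t, h.toFun t.1 = Sum.inr (P t) := fun t => (ex t).choose_spec.1
  have hP2 : ∀ t, Y.act (P t).1 (P t).2 = t.1 := fun t => (ex t).choose_spec.2.1
  have hP3 : ∀ t, (P t).1 ∉ Set.range f.toFun := fun t => (ex t).choose_spec.2.2
  have hPact : ∀ (t : T.carrier) (s : S), P (T.act t s) = ((P t).1, (P t).2 * s) := by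
    intro t s
    apply Sum.inr.inj (α := X.carrier)
    rw [← hP1 (T.act t s)]
    show h.toFun (Y.act t.1 s) = _
    rw [h.map_act, hP1 t]
    rfl
  refine genProj (T := T) (fun t => ⟨(P t).1, hP3 t⟩) (fun t => (P t).2) ?_ ?_ ?_
  · intro t
    apply Subtype.ext
    exact hP2 t
  · intro t s
    apply Subtype.ext
    show (P (T.act t s)).1 = (P t).1
    rw [hPact]
  · intro t s
    show (P (T.act t s)).2 = (P t).2 * s
    rw [hPact]

theorem statement12 :
    IsWFS (UXClass (fun P : SAct S => ProjectiveAct P)) (EpiClass S) := by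
  constructor
  · intro A B g
    constructor
    · intro hg X Y f hf
      exact main_lift f g hf hg
    · intro hr b
      let v : SMap (regAct S) B := ⟨fun s => B.act b s, fun a s => (B.act_mul b a s).symm⟩
      have hsq : g.comp (emptyTo A) = v.comp (emptyTo (regAct S)) :=
        smap_ext fun a => a.elim
      obtain ⟨h, -, hgh⟩ := hr (emptyTo (regAct S)) emptyTo_mem (emptyTo A) v hsq
      refine ⟨h.toFun (1 : S), ?_⟩
      have := congrArg (fun m : SMap (regAct S) B => m.toFun (1 : S)) hgh
      simp only [SMap.comp] at this
      rw [this]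
      exact B.act_one b
  · intro A B f
    constructor
    · intro hf C D g hg
      exact main_lift f g hf hg
    · exact llp_to_mem f
  · intro A B hmap
    exact ⟨factObj A B, factJ A B, factG hmap, factJ_mem A B, factG_surj hmap,
      smap_ext fun x => rfl⟩
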